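/- Let δ, δ̃ lie in the same connected component (chamber) of M_ℝ^W \ 𝓗^W. Then 𝒞_δ = 𝒞_{δ̃}, and moreover (δ + (1/2)Σ) ∩ (M^+ + ρ) = (δ̃ + (1/2)Σ) ∩ (M^+ + ρ). -/
import Mathlib


open scoped Pointwise

noncomputable section

variable {V : Type} [NormedAddCommGroup V] [NormedSpace ℝ V]

/-- The polytope `(1/2)Σ` translated to `γ`, where `Σ = { Σ a_i β_i : a_i ∈ [0,1] }`. -/
def halfSigma {d : ℕ} (β : Fin d → V) (γ : V) : Set V :=
  {x | ∃ a : Fin d → ℝ, (∀ i, a i ∈ Set.Icc (0 : ℝ) 1) ∧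
    x = γ + (2⁻¹ : ℝ) • ∑ i, a i • β i}

/-- Let `δ, δ̃` lie in the same chamber of `M_ℝ^W ∖ 𝓗^W` (i.e. they lie in
a common connected subset of the `W`-fixed points avoiding the wall system, the latter being
characterized by: a point `γ` is off `𝓗^W` iff `∂(γ + ∇)` contains no lattice point).
Then `𝒞_δ = 𝒞_{δ̃}`, and moreover
`(δ + (1/2)Σ) ∩ (M^+ + ρ) = (δ̃ + (1/2)Σ) ∩ (M^+ + ρ)`.

Here `M` is the weight lattice, `Cdom` the (real) dominant cone, `M^+ = M ∩ Cdom` the set of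
dominant weights, `ρ` the half sum of positive roots, `𝒞_γ = (γ + ∇) ∩ M^+`, and the
magic-window polytope `∇` satisfies `(γ + ∇) ∩ M_ℝ^+ = (γ - ρ + (1/2)Σ) ∩ M_ℝ^+` for all
`W`-fixed `γ`. -/
theorem statement17 {d : ℕ} (β : Fin d → V)
    (M : AddSubgroup V) (Cdom : Set V) (Mplus : Set V)
    (hMplus : Mplus = (M : Set V) ∩ Cdom)
    (ρ : V)
    (nabla : Set V) (hconv : Convex ℝ nabla) (hcomp : IsCompact nabla)
    (Mw : Submodule ℝ V)
    (hnablaSigma : ∀ γ ∈ Mw,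
      ((γ +ᵥ nabla) ∩ Cdom) = {x | ρ + x ∈ halfSigma β γ} ∩ Cdom)
    (δ δtilde : V) (hδ : δ ∈ Mw) (hδtilde : δtilde ∈ Mw)
    (C : Set V) (hC : IsConnected C) (hCsub : C ⊆ (Mw : Set V))
    (hCoff : ∀ γ ∈ C, ∀ x ∈ frontier (γ +ᵥ nabla), x ∉ (M : Set V))
    (hδC : δ ∈ C) (hδtildeC : δtilde ∈ C) :
    (δ +ᵥ nabla) ∩ Mplus = (δtilde +ᵥ nabla) ∩ Mplus ∧
    halfSigma β δ ∩ (ρ +ᵥ Mplus) = halfSigma β δtilde ∩ (ρ +ᵥ Mplus) := by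
  have hclosed : IsClosed nabla := hcomp.isClosed
  -- if m ∈ γ + ∇ for γ ∈ C and m is a lattice point, then m is in the interior
  have hint : ∀ m ∈ (M : Set V), ∀ γ ∈ C, m ∈ γ +ᵥ nabla → m - γ ∈ interior nabla := by
    intro m hm γ hγ hmem
    have hfr : m ∉ frontier (γ +ᵥ nabla) := fun h => hCoff γ hγ m h hm
    have hcl : m ∈ closure (γ +ᵥ nabla) := subset_closure hmem
    have hmi : m ∈ interior (γ +ᵥ nabla) := by
      by_contra hni
      exact hfr ⟨hcl, hni⟩
    rw [interior_vadd, Set.mem_vadd_set_iff_neg_vadd_mem] at hmi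
    simpa [neg_add_eq_sub] using hmi
  -- key connectedness argument
  have key : ∀ m ∈ (M : Set V), ∀ γ₁ ∈ C, ∀ γ₂ ∈ C,
      m ∈ γ₁ +ᵥ nabla → m ∈ γ₂ +ᵥ nabla := by
    intro m hm γ₁ hγ₁ γ₂ hγ₂ h1
    by_contra h2
    set U : Set V := (fun γ => m - γ) ⁻¹' interior nabla with hU
    set W : Set V := (fun γ => m - γ) ⁻¹' nablaᶜ with hW
    have hcont : Continuous (fun γ : V => m - γ) := continuous_const.sub continuous_id
    have hUopen : IsOpen U := isOpen_interior.preimage hcont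
    have hWopen : IsOpen W := hclosed.isOpen_compl.preimage hcont
    have hvadd : ∀ γ : V, m ∈ γ +ᵥ nabla ↔ m - γ ∈ nabla := by
      intro γ
      rw [Set.mem_vadd_set_iff_neg_vadd_mem]
      constructor <;> intro h <;> simpa [neg_add_eq_sub] using h
    have hcover : C ⊆ U ∪ W := by
      intro γ hγ
      by_cases hmem : m ∈ γ +ᵥ nabla
      · exact Or.inl (hint m hm γ hγ hmem)
      · exact Or.inr (fun hc => hmem ((hvadd γ).mpr hc))
    have h1' : (C ∩ U).Nonempty := ⟨γ₁, hγ₁, hint m hm γ₁ hγ₁ h1⟩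
    have h2' : (C ∩ W).Nonempty := ⟨γ₂, hγ₂, fun hc => h2 ((hvadd γ₂).mpr hc)⟩
    obtain ⟨γ, _, hγU, hγW⟩ := hC.isPreconnected U W hUopen hWopen hcover h1' h2'
    exact hγW (interior_subset hγU)
  -- first equality
  have part1 : (δ +ᵥ nabla) ∩ Mplus = (δtilde +ᵥ nabla) ∩ Mplus := by
    ext x
    constructor
    · rintro ⟨hx, hxM⟩
      have hxM' : x ∈ (M : Set V) := (hMplus ▸ hxM).1
      exact ⟨key x hxM' δ hδC δtilde hδtildeC hx, hxM⟩
    · rintro ⟨hx, hxM⟩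
      have hxM' : x ∈ (M : Set V) := (hMplus ▸ hxM).1
      exact ⟨key x hxM' δtilde hδtildeC δ hδC hx, hxM⟩
  refine ⟨part1, ?_⟩
  -- second equality, via hnablaSigma
  have hiff : ∀ γ ∈ Mw, ∀ x ∈ Mplus, (ρ + x ∈ halfSigma β γ ↔ x ∈ γ +ᵥ nabla) := by
    intro γ hγ x hx
    have hxC : x ∈ Cdom := (hMplus ▸ hx).2
    have h := Set.ext_iff.mp (hnablaSigma γ hγ) x
    simp only [Set.mem_inter_iff, Set.mem_setOf_eq] at h
    constructor
    · intro hh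
      exact (h.mpr ⟨hh, hxC⟩).1
    · intro hh
      exact (h.mp ⟨hh, hxC⟩).1
  ext y
  simp only [Set.mem_inter_iff, Set.mem_vadd_set_iff_neg_vadd_mem]
  constructor
  · rintro ⟨hy, hyM⟩
    have hy' : y = ρ + (-ρ + y) := by abel
    have h1 : (-ρ + y) ∈ δ +ᵥ nabla := (hiff δ hδ _ hyM).mp (hy' ▸ hy)
    have h2 : (-ρ + y) ∈ δtilde +ᵥ nabla :=
      (Set.ext_iff.mp part1 _ |>.mp ⟨h1, hyM⟩).1
    exact ⟨hy' ▸ (hiff δtilde hδtilde _ hyM).mpr h2, hyM⟩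
  · rintro ⟨hy, hyM⟩
    have hy' : y = ρ + (-ρ + y) := by abel
    have h1 : (-ρ + y) ∈ δtilde +ᵥ nabla := (hiff δtilde hδtilde _ hyM).mp (hy' ▸ hy)
    have h2 : (-ρ + y) ∈ δ +ᵥ nabla :=
      (Set.ext_iff.mp part1 _ |>.mpr ⟨h1, hyM⟩).1
    exact ⟨hy' ▸ (hiff δ hδ _ hyM).mpr h2, hyM⟩
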